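/- Let G = (V,E) be a finite simple undirected graph, s, t ∈ V distinct, and let C be a fractional (s,t)-vertex cut of G. Set d(v) = dist_{G,C}(s,v) (with d(v) = ∞ if v is unreachable from s). For every θ ∈ (0,1), define L_θ = {v : d(v) < θ}, S_θ = {v : θ ≤ d(v) ≤ θ + C(v)}, and R_θ = {v : d(v) - C(v) > θ} (unreachable vertices belong to R_θ). Then (L_θ, S_θ, R_θ) is a partition of V, s ∈ L_θ, t ∈ R_θ, and no edge of G joins a vertex of L_θ to a vertex of R_θ; in particular (L_θ, S_θ, R_θ) is an (s,t)-vertex cut. -/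

import Mathlib

open scoped ENNReal

noncomputable def vdist {V : Type*} (G : SimpleGraph V) (C : V → ℝ) (s v : V) : ℝ≥0∞ :=
  ⨅ p : {p : G.Walk s v // p.IsPath}, ENNReal.ofReal ((p.1.support.map C).sum)

private lemma list_sum_le {V : Type*} [DecidableEq V] {C : V → ℝ} (hC : ∀ v, 0 ≤ C v)
    {l₁ l₂ : List V} (hnd : l₁.Nodup) (hsub : l₁ ⊆ l₂) :
    (l₁.map C).sum ≤ (l₂.map C).sum := by
  rw [← List.sum_toFinset C hnd]
  calc l₁.toFinset.sum C ≤ l₂.toFinset.sum C := by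
        apply Finset.sum_le_sum_of_subset_of_nonneg
        · intro x hx
          simp only [List.mem_toFinset] at *
          exact hsub hx
        · intro x _ _; exact hC x
    _ = (l₂.dedup.map C).sum := by
        rw [← List.sum_toFinset C (List.nodup_dedup l₂)]
        congr 1
        ext x
        simp
    _ ≤ (l₂.map C).sum := by
        apply List.Sublist.sum_le_sum
        · exact (List.dedup_sublist l₂).map C
        · intro a ha
          obtain ⟨x, _, rfl⟩ := List.mem_map.mp ha
          exact hC x
private lemma vdist_le_walk {V : Type*} (G : SimpleGraph V) {C : V → ℝ} (hC : ∀ v, 0 ≤ C v)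
    (s v : V) (w : G.Walk s v) :
    vdist G C s v ≤ ENNReal.ofReal ((w.support.map C).sum) := by
  classical
  refine iInf_le_of_le ⟨w.bypass, w.bypass_isPath⟩ ?_
  exact ENNReal.ofReal_le_ofReal
    (list_sum_le hC w.bypass_isPath.support_nodup w.support_bypass_subset)

private lemma vdist_adj {V : Type*} (G : SimpleGraph V) {C : V → ℝ} (hC : ∀ v, 0 ≤ C v)
    (s u v : V) (h : G.Adj u v) :
    vdist G C s v ≤ vdist G C s u + ENNReal.ofReal (C v) := by
  have heq : vdist G C s u + ENNReal.ofReal (C v) =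
      ⨅ p : {p : G.Walk s u // p.IsPath},
        (ENNReal.ofReal ((p.1.support.map C).sum) + ENNReal.ofReal (C v)) := ENNReal.iInf_add
  rw [heq]
  refine le_iInf fun p => ?_
  calc vdist G C s v ≤ ENNReal.ofReal (((p.1.concat h).support.map C).sum) :=
        vdist_le_walk G hC s v (p.1.concat h)
    _ = ENNReal.ofReal ((p.1.support.map C).sum) + ENNReal.ofReal (C v) := by
        rw [SimpleGraph.Walk.support_concat, List.map_append,
          List.sum_append, List.map_singleton, List.sum_singleton,
          ENNReal.ofReal_add ?_ (hC v)]
        apply List.sum_nonneg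
        intro a ha
        obtain ⟨x, _, rfl⟩ := List.mem_map.mp ha
        exact hC x

theorem stmt_1 {V : Type*} [Fintype V] (G : SimpleGraph V) (s t : V) (hst : s ≠ t)
    (C : V → ℝ) (hC : ∀ v, 0 ≤ C v) (hCs : C s = 0) (hCt : C t = 0)
    (hcut : ∀ p : G.Walk s t, p.IsPath → 1 ≤ (p.support.map C).sum)
    (θ : ℝ) (hθ0 : 0 < θ) (hθ1 : θ < 1) :
    let d : V → ℝ≥0∞ := fun v => vdist G C s v
    let L : Set V := {v | d v < ENNReal.ofReal θ}
    let S : Set V := {v | ENNReal.ofReal θ ≤ d v ∧ d v ≤ ENNReal.ofReal θ + ENNReal.ofReal (C v)}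
    let R : Set V := {v | ENNReal.ofReal θ + ENNReal.ofReal (C v) < d v}
    (L ∪ S ∪ R = Set.univ) ∧ Disjoint L S ∧ Disjoint L R ∧ Disjoint S R ∧
      (∀ v, ¬ G.Reachable s v → v ∈ R) ∧
      s ∈ L ∧ t ∈ R ∧ (∀ u ∈ L, ∀ v ∈ R, ¬ G.Adj u v) := by
  intro d L S R
  have hds : d s = 0 := by
    refine le_antisymm ?_ zero_le
    have := vdist_le_walk G hC s s SimpleGraph.Walk.nil
    simpa [hCs] using this
  have hdt : ENNReal.ofReal 1 ≤ d t := by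
    refine le_iInf fun p => ENNReal.ofReal_le_ofReal (hcut p.1 p.2)
  refine ⟨?_, ?_, ?_, ?_, ?_, ?_, ?_, ?_⟩
  · ext v
    simp only [Set.mem_union, Set.mem_setOf_eq, Set.mem_univ, iff_true, L, S, R]
    rcases lt_or_ge (d v) (ENNReal.ofReal θ) with h | h
    · exact Or.inl (Or.inl h)
    rcases le_or_gt (d v) (ENNReal.ofReal θ + ENNReal.ofReal (C v)) with h2 | h2
    · exact Or.inl (Or.inr ⟨h, h2⟩)
    · exact Or.inr h2
  · rw [Set.disjoint_left]
    intro v hv hv'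
    exact absurd hv'.1 (not_le.mpr hv)
  · rw [Set.disjoint_left]
    intro v hv hv'
    simp only [Set.mem_setOf_eq, L, R] at hv hv'
    exact absurd (hv.trans_le le_self_add) (not_lt.mpr hv'.le)
  · rw [Set.disjoint_left]
    intro v hv hv'
    simp only [Set.mem_setOf_eq, S, R] at hv hv'
    exact absurd hv.2 (not_le.mpr hv')
  · intro v hv
    have : d v = ⊤ := by
      have : IsEmpty {p : G.Walk s v // p.IsPath} := ⟨fun p => hv ⟨p.1⟩⟩
      simp [d, vdist, iInf_of_empty]
    simp only [Set.mem_setOf_eq, R, this]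
    exact (ENNReal.add_lt_top.mpr ⟨ENNReal.ofReal_lt_top, ENNReal.ofReal_lt_top⟩)
  · simp only [Set.mem_setOf_eq, L, hds]
    exact ENNReal.ofReal_pos.mpr hθ0
  · simp only [Set.mem_setOf_eq, R, hCt, ENNReal.ofReal_zero, add_zero]
    exact lt_of_lt_of_le (ENNReal.ofReal_lt_ofReal_iff (by norm_num) |>.mpr hθ1) hdt
  · intro u hu v hv hadj
    simp only [Set.mem_setOf_eq, L, R] at hu hv
    have h1 : d v ≤ d u + ENNReal.ofReal (C v) := vdist_adj G hC s u v hadj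
    have h2 : d u + ENNReal.ofReal (C v) < ENNReal.ofReal θ + ENNReal.ofReal (C v) :=
      ENNReal.add_lt_add_right ENNReal.ofReal_ne_top hu
    exact absurd (h1.trans_lt h2) (not_lt.mpr hv.le)
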